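/- Let f₁, …, f_n : ℝᵈ → ℝ each have L-Lipschitz gradient, f = (1/n)Σᵢ fᵢ, and fix x, x̃ ∈ ℝᵈ. Let i₁, …, i_b be i.i.d. uniform on {1,…,n} and define v = (1/b)Σ_{j=1}^b (∇f_{i_j}(x) - ∇f_{i_j}(x̃)) + ∇f(x̃). Then E[v] = ∇f(x) and E[‖v - ∇f(x)‖²] ≤ (L²/b)·‖x - x̃‖². -/

import Mathlib

open scoped BigOperators

section Aux

variable {n : ℕ} {α : Type*} [Fintype α] [DecidableEq α]
variable {M : Type*} [AddCommMonoid M]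

lemma sum_fun_apply (j : α) (Y : Fin n → M) :
    ∑ ι : α → Fin n, Y (ι j)
      = (Fintype.card ({ i : α // i ≠ j } → Fin n)) • ∑ i, Y i := by
  rw [← (Equiv.funSplitAt j (Fin n)).symm.sum_comp (fun ι => Y (ι j))]
  have h1 : ∀ p : Fin n × ({ i : α // i ≠ j } → Fin n),
      ((Equiv.funSplitAt j (Fin n)).symm p) j = p.1 := by
    intro p; simp [Equiv.funSplitAt, Equiv.piSplitAt]
  simp only [h1]
  rw [Fintype.sum_prod_type, Finset.sum_comm]
  simp [Finset.sum_const, Finset.card_univ]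

lemma card_fun_ne (j : α) :
    Fintype.card ({ i : α // i ≠ j } → Fin n) = n ^ (Fintype.card α - 1) := by
  rw [Fintype.card_fun, Fintype.card_fin]
  congr 1
  rw [Fintype.card_subtype_compl]
  simp

end Aux

theorem minibatch_svrg_variance {d n b : ℕ} (hn : 0 < n) (hb : 0 < b)
    (f : Fin n → EuclideanSpace ℝ (Fin d) → ℝ)
    (g : Fin n → EuclideanSpace ℝ (Fin d) → EuclideanSpace ℝ (Fin d)) (L : ℝ)
    (hdiff : ∀ i x, HasGradientAt (f i) (g i x) x)
    (hLip : ∀ i x y, ‖g i x - g i y‖ ≤ L * ‖x - y‖)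
    (x xt : EuclideanSpace ℝ (Fin d))
    (gbar : EuclideanSpace ℝ (Fin d) → EuclideanSpace ℝ (Fin d))
    (hgbar : ∀ u, gbar u = (n : ℝ)⁻¹ • ∑ i, g i u)
    (v : (Fin b → Fin n) → EuclideanSpace ℝ (Fin d))
    (hv : ∀ ι : Fin b → Fin n,
      v ι = (b : ℝ)⁻¹ • ∑ j, (g (ι j) x - g (ι j) xt) + gbar xt) :
    (((n : ℝ) ^ b)⁻¹ • ∑ ι : Fin b → Fin n, v ι) = gbar x ∧
      ((n : ℝ) ^ b)⁻¹ * ∑ ι : Fin b → Fin n, ‖v ι - gbar x‖ ^ 2 ≤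
        (L ^ 2 / b) * ‖x - xt‖ ^ 2 := by
  classical
  set Z : Fin n → EuclideanSpace ℝ (Fin d) := fun i => g i x - g i xt with hZdef
  have hZa : ∀ i, g i x - g i xt = Z i := fun _ => rfl
  set m : EuclideanSpace ℝ (Fin d) := gbar x - gbar xt with hmdef
  have hnR : (0:ℝ) < n := by exact_mod_cast hn
  have hbR : (0:ℝ) < b := by exact_mod_cast hb
  have hne : (n:ℝ) ≠ 0 := ne_of_gt hnR
  have hbne : (b:ℝ) ≠ 0 := ne_of_gt hbR
  have hpne : ((n:ℝ)) ^ (b-1) ≠ 0 := pow_ne_zero _ hne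
  have hm : (n : ℝ) • m = ∑ i, Z i := by
    rw [hmdef, hgbar, hgbar, ← smul_sub, ← Finset.sum_sub_distrib, smul_smul,
      mul_inv_cancel₀ hne, one_smul]
  set Y : Fin n → EuclideanSpace ℝ (Fin d) := fun i => Z i - m with hYdef
  have hY0 : ∑ i, Y i = 0 := by
    have h : ∑ i, Y i = (∑ i, Z i) - (n:ℝ) • m := by
      rw [hYdef, Finset.sum_sub_distrib, Finset.sum_const, Finset.card_univ,
        Fintype.card_fin, ← Nat.cast_smul_eq_nsmul ℝ]
    rw [h, hm, sub_self]
  have hcard : ∀ j : Fin b, Fintype.card ({ i : Fin b // i ≠ j } → Fin n) = n ^ (b - 1) := by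
    intro j; rw [card_fun_ne, Fintype.card_fin]
  have hpow : (n:ℝ) ^ (b-1) * n = (n:ℝ) ^ b := by
    rw [← pow_succ]; congr 1; omega
  -- Part 1
  have part1 : (((n : ℝ) ^ b)⁻¹ • ∑ ι : Fin b → Fin n, v ι) = gbar x := by
    have hsum : ∑ ι : Fin b → Fin n, v ι
        = (b : ℝ)⁻¹ • ∑ j : Fin b, ∑ ι : Fin b → Fin n, Z (ι j)
          + (n ^ b : ℕ) • gbar xt := by
      simp only [hv, hZa]
      rw [Finset.sum_add_distrib, Finset.sum_const, Finset.card_univ, ← Finset.smul_sum,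
        Finset.sum_comm, Fintype.card_fun, Fintype.card_fin]
      simp [Fintype.card_fin]
    have h2 : ∑ j : Fin b, ∑ ι : Fin b → Fin n, Z (ι j)
        = (b * n ^ (b-1) : ℝ) • ∑ i, Z i := by
      have h3 : ∀ j : Fin b, ∑ ι : Fin b → Fin n, Z (ι j) = ((n:ℝ) ^ (b-1)) • ∑ i, Z i := by
        intro j
        rw [sum_fun_apply j Z, hcard j, ← Nat.cast_smul_eq_nsmul ℝ]
        norm_num
      simp only [h3, Finset.sum_const, Finset.card_univ, Fintype.card_fin,
        ← Nat.cast_smul_eq_nsmul ℝ, smul_smul]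
    have hx : gbar x = m + gbar xt := by rw [hmdef]; abel
    rw [hsum, smul_add, h2, ← hm, hx]
    match_scalars
    · field_simp
      linear_combination hpow
    · field_simp
      linear_combination -hpow
  refine ⟨part1, ?_⟩
  -- Part 2
  have hvd : ∀ ι : Fin b → Fin n, v ι - gbar x = (b:ℝ)⁻¹ • ∑ j, Y (ι j) := by
    intro ι
    have h : ∑ j : Fin b, Y (ι j) = (∑ j : Fin b, Z (ι j)) - (b:ℝ) • m := by
      rw [hYdef, Finset.sum_sub_distrib, Finset.sum_const, Finset.card_univ,
        Fintype.card_fin, ← Nat.cast_smul_eq_nsmul ℝ]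
    rw [hv, h, smul_sub, smul_smul, inv_mul_cancel₀ hbne, one_smul, hmdef]
    simp only [hZa]
    abel
  have hoff : ∀ j k : Fin b, j ≠ k →
      ∑ ι : Fin b → Fin n, (inner ℝ (Y (ι j)) (Y (ι k)) : ℝ) = 0 := by
    intro j k hjk
    have hk : k ≠ j := hjk.symm
    rw [← (Equiv.funSplitAt j (Fin n)).symm.sum_comp
      (fun ι => (inner ℝ (Y (ι j)) (Y (ι k)) : ℝ))]
    have h1 : ∀ p : Fin n × ({ i : Fin b // i ≠ j } → Fin n),
        ((Equiv.funSplitAt j (Fin n)).symm p) j = p.1 := by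
      intro p; simp [Equiv.funSplitAt, Equiv.piSplitAt]
    have h2 : ∀ p : Fin n × ({ i : Fin b // i ≠ j } → Fin n),
        ((Equiv.funSplitAt j (Fin n)).symm p) k = p.2 ⟨k, hk⟩ := by
      intro p; simp [Equiv.funSplitAt, Equiv.piSplitAt, hk]
    simp only [h1, h2]
    rw [Fintype.sum_prod_type]
    have h3 : ∀ a : Fin n, ∑ ρ : { i : Fin b // i ≠ j } → Fin n,
        (inner ℝ (Y a) (Y (ρ ⟨k, hk⟩)) : ℝ) = 0 := by
      intro a
      rw [← inner_sum, sum_fun_apply (⟨k, hk⟩ : { i : Fin b // i ≠ j }) Y, hY0,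
        smul_zero, inner_zero_right]
    exact Finset.sum_eq_zero fun a _ => h3 a
  have hdiag : ∀ j : Fin b,
      ∑ ι : Fin b → Fin n, (inner ℝ (Y (ι j)) (Y (ι j)) : ℝ)
        = (n : ℝ) ^ (b-1) * ∑ i, ‖Y i‖ ^ 2 := by
    intro j
    have h := sum_fun_apply (α := Fin b) j (fun i => ‖Y i‖ ^ 2)
    simp only [real_inner_self_eq_norm_sq]
    simpa [hcard j] using h
  have key : ∑ ι : Fin b → Fin n, ‖∑ j, Y (ι j)‖ ^ 2
      = (b : ℝ) * ((n:ℝ) ^ (b-1)) * ∑ i, ‖Y i‖ ^ 2 := by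
    have expand : ∀ ι : Fin b → Fin n, ‖∑ j, Y (ι j)‖ ^ 2
        = ∑ j : Fin b, ∑ k : Fin b, (inner ℝ (Y (ι j)) (Y (ι k)) : ℝ) := by
      intro ι
      rw [← real_inner_self_eq_norm_sq, sum_inner]
      exact Finset.sum_congr rfl fun j _ => inner_sum _ _ _
    simp only [expand]
    rw [Finset.sum_comm]
    have h4 : ∀ j : Fin b, ∑ k : Fin b, ∑ ι : Fin b → Fin n,
        (inner ℝ (Y (ι j)) (Y (ι k)) : ℝ) = (n:ℝ) ^ (b-1) * ∑ i, ‖Y i‖ ^ 2 := by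
      intro j
      rw [Finset.sum_eq_single j (fun k _ hkj => hoff j k (Ne.symm hkj)) (by simp)]
      exact hdiag j
    have h5 : ∀ j : Fin b, ∑ ι : Fin b → Fin n, ∑ k : Fin b,
        (inner ℝ (Y (ι j)) (Y (ι k)) : ℝ) = (n:ℝ) ^ (b-1) * ∑ i, ‖Y i‖ ^ 2 := by
      intro j; rw [Finset.sum_comm]; exact h4 j
    simp only [h5, Finset.sum_const, Finset.card_univ, Fintype.card_fin, nsmul_eq_mul]
    ring
  have hYZ : ∑ i, ‖Y i‖ ^ 2 ≤ ∑ i, ‖Z i‖ ^ 2 := by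
    have expand : ∀ i, ‖Y i‖ ^ 2 = ‖Z i‖ ^ 2 - 2 * inner ℝ (Z i) m + ‖m‖ ^ 2 := by
      intro i
      simpa [hYdef] using norm_sub_sq_real (Z i) m
    simp only [expand, Finset.sum_add_distrib, Finset.sum_sub_distrib, ← Finset.mul_sum,
      Finset.sum_const, Finset.card_univ, Fintype.card_fin, nsmul_eq_mul]
    have h6 : ∑ i, (inner ℝ (Z i) m : ℝ) = (n:ℝ) * ‖m‖ ^ 2 := by
      rw [← sum_inner, ← hm, real_inner_smul_left, real_inner_self_eq_norm_sq]
    rw [h6]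
    nlinarith [sq_nonneg ‖m‖, hnR]
  have hZL : ∑ i, ‖Z i‖ ^ 2 ≤ (n:ℝ) * (L ^ 2 * ‖x - xt‖ ^ 2) := by
    have h7 : ∀ i : Fin n, ‖Z i‖ ^ 2 ≤ L ^ 2 * ‖x - xt‖ ^ 2 := by
      intro i
      have h1 : ‖Z i‖ ≤ L * ‖x - xt‖ := hLip i x xt
      nlinarith [norm_nonneg (Z i), norm_nonneg (x - xt)]
    calc ∑ i, ‖Z i‖ ^ 2 ≤ ∑ _i : Fin n, L ^ 2 * ‖x - xt‖ ^ 2 :=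
          Finset.sum_le_sum fun i _ => h7 i
      _ = (n:ℝ) * (L ^ 2 * ‖x - xt‖ ^ 2) := by
          simp [Finset.sum_const, mul_comm]
  have hnorm : ∀ ι : Fin b → Fin n, ‖v ι - gbar x‖ ^ 2
      = (b:ℝ)⁻¹ ^ 2 * ‖∑ j, Y (ι j)‖ ^ 2 := by
    intro ι
    rw [hvd ι, norm_smul, mul_pow]
    norm_num
  have sumeq : ∑ ι : Fin b → Fin n, ‖v ι - gbar x‖ ^ 2
      = (b:ℝ)⁻¹ ^ 2 * ∑ ι : Fin b → Fin n, ‖∑ j, Y (ι j)‖ ^ 2 := by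
    rw [Finset.mul_sum]
    exact Finset.sum_congr rfl fun ι _ => hnorm ι
  have hcoef : ((n:ℝ) ^ b)⁻¹ * ((b:ℝ)⁻¹ ^ 2 * ((b:ℝ) * (n:ℝ) ^ (b-1))) =
      (b:ℝ)⁻¹ * (n:ℝ)⁻¹ := by
    rw [← hpow]; field_simp
  calc ((n : ℝ) ^ b)⁻¹ * ∑ ι : Fin b → Fin n, ‖v ι - gbar x‖ ^ 2
      = ((b:ℝ)⁻¹ * (n:ℝ)⁻¹) * ∑ i, ‖Y i‖ ^ 2 := by
        rw [sumeq, key, ← hcoef]; ring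
    _ ≤ ((b:ℝ)⁻¹ * (n:ℝ)⁻¹) * ((n:ℝ) * (L ^ 2 * ‖x - xt‖ ^ 2)) := by
        apply mul_le_mul_of_nonneg_left (hYZ.trans hZL)
        positivity
    _ = (L ^ 2 / b) * ‖x - xt‖ ^ 2 := by
        field_simp
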